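/- Let μ be a measure on a measurable space X and let p = 2m be a positive even integer. The functional N : L^p(μ; ℝ) → ℝ, N(ξ) = ∫_X ξ(x)^p dμ(x), is Fréchet differentiable at every ξ ∈ L^p(μ; ℝ), and its Fréchet derivative at ξ is the bounded linear functional η ↦ p · ∫_X ξ(x)^{p-1} η(x) dμ(x). -/

import Mathlib

open MeasureTheory
open scoped ENNReal

section Aux

variable {X : Type*} [MeasurableSpace X] {μ : Measure X}

private lemma eLpNorm_pow_nat' (f : X → ℝ) {p a : ℕ} (ha : 0 < a) :
    eLpNorm (fun x => f x ^ a) ((p : ℝ≥0∞) / (a : ℝ≥0∞)) μ = eLpNorm f (p : ℝ≥0∞) μ ^ a := by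
  have h := eLpNorm_norm_rpow (μ := μ) (p := (p : ℝ≥0∞) / (a : ℝ≥0∞)) f
    (q := (a : ℝ)) (by exact_mod_cast ha)
  rw [ENNReal.ofReal_natCast,
    ENNReal.div_mul_cancel (by exact_mod_cast ha.ne') (ENNReal.natCast_ne_top a)] at h
  have h2 : eLpNorm (fun x => f x ^ a) ((p : ℝ≥0∞) / (a : ℝ≥0∞)) μ
      = eLpNorm (fun x => ‖f x‖ ^ (a : ℝ)) ((p : ℝ≥0∞) / (a : ℝ≥0∞)) μ := by
    apply eLpNorm_congr_norm_ae
    filter_upwards with x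
    rw [Real.rpow_natCast, Real.norm_eq_abs, Real.norm_eq_abs, Real.norm_eq_abs,
      abs_pow, abs_pow, abs_abs]
  rw [h2, h, ← ENNReal.rpow_natCast]

private lemma eLpNorm_one_pow_mul_pow_le' {f g : X → ℝ} (hf : AEStronglyMeasurable f μ)
    (hg : AEStronglyMeasurable g μ) {p a b : ℕ} (hab : a + b = p) (hp : 0 < p) :
    eLpNorm (fun x => f x ^ a * g x ^ b) 1 μ
      ≤ eLpNorm f (p : ℝ≥0∞) μ ^ a * eLpNorm g (p : ℝ≥0∞) μ ^ b := by
  have hp0 : (p : ℝ≥0∞) ≠ 0 := by exact_mod_cast hp.ne'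
  have hpt : (p : ℝ≥0∞) ≠ ∞ := ENNReal.natCast_ne_top p
  rcases Nat.eq_zero_or_pos a with ha | ha
  · subst ha
    simp only [pow_zero, one_mul, Nat.zero_add] at hab ⊢
    subst hab
    have := eLpNorm_pow_nat' (μ := μ) g (p := b) (a := b) hp
    rw [ENNReal.div_self hp0 hpt] at this
    rw [this]
  rcases Nat.eq_zero_or_pos b with hb | hb
  · subst hb
    simp only [pow_zero, mul_one, Nat.add_zero] at hab ⊢
    subst hab
    have := eLpNorm_pow_nat' (μ := μ) f (p := a) (a := a) hp
    rw [ENNReal.div_self hp0 hpt] at this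
    rw [this]
  have hpqr : (1 : ℝ≥0∞) / 1 = 1 / ((p : ℝ≥0∞) / (a : ℝ≥0∞)) + 1 / ((p : ℝ≥0∞) / (b : ℝ≥0∞)) := by
    rw [one_div, one_div, one_div, inv_one,
      ENNReal.inv_div (Or.inl (ENNReal.natCast_ne_top a)) (Or.inr hp0),
      ENNReal.inv_div (Or.inl (ENNReal.natCast_ne_top b)) (Or.inr hp0),
      ENNReal.div_add_div_same, ← Nat.cast_add, hab, ENNReal.div_self hp0 hpt]
  haveI : ENNReal.HolderTriple ((p : ℝ≥0∞) / (a : ℝ≥0∞)) ((p : ℝ≥0∞) / (b : ℝ≥0∞)) 1 :=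
    ⟨by simpa [one_div] using hpqr.symm⟩
  have H := eLpNorm_le_eLpNorm_mul_eLpNorm'_of_norm (μ := μ) (r := 1)
    (p := (p : ℝ≥0∞) / (a : ℝ≥0∞)) (q := (p : ℝ≥0∞) / (b : ℝ≥0∞))
    (f := fun x => f x ^ a) (g := fun x => g x ^ b)
    (hf.pow a) (hg.pow b) (fun u v => u * v) 1
    (by filter_upwards with x; rw [norm_mul, NNReal.coe_one, one_mul])
  rw [ENNReal.coe_one, one_mul] at H
  calc eLpNorm (fun x => f x ^ a * g x ^ b) 1 μ
      ≤ eLpNorm (fun x => f x ^ a) ((p : ℝ≥0∞) / (a : ℝ≥0∞)) μ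
        * eLpNorm (fun x => g x ^ b) ((p : ℝ≥0∞) / (b : ℝ≥0∞)) μ := H
    _ = _ := by rw [eLpNorm_pow_nat' f ha, eLpNorm_pow_nat' g hb]

private lemma integrable_and_abs_integral_le' {p : ℕ} {f g : X → ℝ}
    (hf : MemLp f (p : ℝ≥0∞) μ) (hg : MemLp g (p : ℝ≥0∞) μ)
    {a b : ℕ} (hab : a + b = p) (hp : 0 < p) :
    Integrable (fun x => f x ^ a * g x ^ b) μ ∧
      |∫ x, f x ^ a * g x ^ b ∂μ|
        ≤ (eLpNorm f (p : ℝ≥0∞) μ).toReal ^ a * (eLpNorm g (p : ℝ≥0∞) μ).toReal ^ b := by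
  have hmeas : AEStronglyMeasurable (fun x => f x ^ a * g x ^ b) μ :=
    (hf.aestronglyMeasurable.pow a).mul (hg.aestronglyMeasurable.pow b)
  have hle := eLpNorm_one_pow_mul_pow_le' hf.aestronglyMeasurable hg.aestronglyMeasurable hab hp
  have hfin : eLpNorm f (p : ℝ≥0∞) μ ^ a * eLpNorm g (p : ℝ≥0∞) μ ^ b < ∞ :=
    ENNReal.mul_lt_top (ENNReal.pow_lt_top (n := a) hf.eLpNorm_lt_top)
      (ENNReal.pow_lt_top (n := b) hg.eLpNorm_lt_top)
  have hmem1 : MemLp (fun x => f x ^ a * g x ^ b) 1 μ := ⟨hmeas, lt_of_le_of_lt hle hfin⟩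
  have hint : Integrable (fun x => f x ^ a * g x ^ b) μ := memLp_one_iff_integrable.mp hmem1
  refine ⟨hint, ?_⟩
  calc |∫ x, f x ^ a * g x ^ b ∂μ| ≤ ∫ x, ‖f x ^ a * g x ^ b‖ ∂μ := by
        rw [← Real.norm_eq_abs]; exact norm_integral_le_integral_norm _
    _ = (eLpNorm (fun x => f x ^ a * g x ^ b) 1 μ).toReal := by
        rw [integral_norm_eq_lintegral_enorm hmeas, eLpNorm_one_eq_lintegral_enorm]
    _ ≤ (eLpNorm f (p : ℝ≥0∞) μ ^ a * eLpNorm g (p : ℝ≥0∞) μ ^ b).toReal :=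
        ENNReal.toReal_mono hfin.ne hle
    _ = _ := by rw [ENNReal.toReal_mul, ENNReal.toReal_pow, ENNReal.toReal_pow]

end Aux

/-- For a positive even integer `p = 2m`, the functional `N(ξ) = ∫ ξ^p dμ` on `L^p(μ; ℝ)`
is Fréchet differentiable at every point `ξ`, with derivative the bounded linear functional
`η ↦ p · ∫ ξ^{p-1} η dμ`. -/
theorem hasFDerivAt_integral_pow {X : Type*} [MeasurableSpace X] (μ : Measure X)
    (m : ℕ) (hm : 0 < m) (p : ℕ) (hp : p = 2 * m) [Fact (1 ≤ (p : ℝ≥0∞))] :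
    ∀ ξ : Lp ℝ p μ, ∃ L : Lp ℝ p μ →L[ℝ] ℝ,
      (∀ η : Lp ℝ p μ,
          L η = (p : ℝ) * ∫ x, (ξ : X → ℝ) x ^ (p - 1) * (η : X → ℝ) x ∂μ) ∧
        HasFDerivAt (fun ζ : Lp ℝ p μ => ∫ x, (ζ : X → ℝ) x ^ p ∂μ) L ξ := by
  intro ξ
  have hppos : 0 < p := by omega
  obtain ⟨q, hq⟩ : ∃ q, p = q + 2 := ⟨p - 2, by omega⟩
  have hf : MemLp (⇑ξ) (p : ℝ≥0∞) μ := Lp.memLp ξ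
  -- key integrability and bound
  have key : ∀ (η : Lp ℝ p μ) (a b : ℕ), a + b = p →
      Integrable (fun x => (ξ : X → ℝ) x ^ a * (η : X → ℝ) x ^ b) μ ∧
        |∫ x, (ξ : X → ℝ) x ^ a * (η : X → ℝ) x ^ b ∂μ| ≤ ‖ξ‖ ^ a * ‖η‖ ^ b := by
    intro η a b hab
    have h := integrable_and_abs_integral_le' hf (Lp.memLp η) hab hppos
    rwa [← Lp.norm_def, ← Lp.norm_def] at h
  have hint1 : ∀ η : Lp ℝ p μ,
      Integrable (fun x => (ξ : X → ℝ) x ^ (p - 1) * (η : X → ℝ) x) μ := by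
    intro η
    have := (key η (p - 1) 1 (by omega)).1
    simpa using this
  -- the candidate derivative as a linear map
  set L₀ : Lp ℝ p μ →ₗ[ℝ] ℝ :=
    { toFun := fun η => (p : ℝ) * ∫ x, (ξ : X → ℝ) x ^ (p - 1) * (η : X → ℝ) x ∂μ
      map_add' := by
        intro η η'
        have h1 : ∫ x, (ξ : X → ℝ) x ^ (p - 1) * ((η + η' : Lp ℝ p μ) : X → ℝ) x ∂μ
            = ∫ x, ((ξ : X → ℝ) x ^ (p - 1) * (η : X → ℝ) x
                + (ξ : X → ℝ) x ^ (p - 1) * (η' : X → ℝ) x) ∂μ := by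
          refine integral_congr_ae ?_
          filter_upwards [Lp.coeFn_add η η'] with x hx
          rw [hx]; simp [mul_add]
        simp only [h1]
        rw [integral_add (hint1 η) (hint1 η')]
        ring
      map_smul' := by
        intro c η
        have h1 : ∫ x, (ξ : X → ℝ) x ^ (p - 1) * ((c • η : Lp ℝ p μ) : X → ℝ) x ∂μ
            = ∫ x, c * ((ξ : X → ℝ) x ^ (p - 1) * (η : X → ℝ) x) ∂μ := by
          refine integral_congr_ae ?_
          filter_upwards [Lp.coeFn_smul c η] with x hx
          rw [hx]; simp [smul_eq_mul]; ring
        simp only [h1]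
        rw [integral_const_mul]
        simp [smul_eq_mul]; ring } with hL₀
  have hbound : ∀ η : Lp ℝ p μ, ‖L₀ η‖ ≤ ((p : ℝ) * ‖ξ‖ ^ (p - 1)) * ‖η‖ := by
    intro η
    have h := (key η (p - 1) 1 (by omega)).2
    simp only [pow_one] at h
    have : ‖L₀ η‖ = (p : ℝ) * |∫ x, (ξ : X → ℝ) x ^ (p - 1) * (η : X → ℝ) x ∂μ| := by
      simp only [hL₀, LinearMap.coe_mk, AddHom.coe_mk, Real.norm_eq_abs, abs_mul,
        Nat.abs_cast]
    rw [this, mul_assoc]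
    exact mul_le_mul_of_nonneg_left h (by positivity)
  refine ⟨L₀.mkContinuous _ hbound, fun η => rfl, ?_⟩
  rw [hasFDerivAt_iff_isLittleO_nhds_zero]
  -- expansion of the difference
  have expand : ∀ η : Lp ℝ p μ,
      (∫ x, ((ξ + η : Lp ℝ p μ) : X → ℝ) x ^ p ∂μ) - (∫ x, (ξ : X → ℝ) x ^ p ∂μ)
          - L₀.mkContinuous _ hbound η
        = ∑ k ∈ Finset.range (q + 1),
            (∫ x, (ξ : X → ℝ) x ^ k * (η : X → ℝ) x ^ (p - k) ∂μ) * (p.choose k : ℝ) := by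
    intro η
    have h1 : ∫ x, ((ξ + η : Lp ℝ p μ) : X → ℝ) x ^ p ∂μ
        = ∫ x, ∑ k ∈ Finset.range (p + 1),
            (ξ : X → ℝ) x ^ k * (η : X → ℝ) x ^ (p - k) * (p.choose k : ℝ) ∂μ := by
      refine integral_congr_ae ?_
      filter_upwards [Lp.coeFn_add ξ η] with x hx
      rw [hx]
      simp only [Pi.add_apply]
      rw [add_pow]
    have h2 : ∫ x, ∑ k ∈ Finset.range (p + 1),
          (ξ : X → ℝ) x ^ k * (η : X → ℝ) x ^ (p - k) * (p.choose k : ℝ) ∂μ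
        = ∑ k ∈ Finset.range (p + 1),
            (∫ x, (ξ : X → ℝ) x ^ k * (η : X → ℝ) x ^ (p - k) ∂μ) * (p.choose k : ℝ) := by
      rw [integral_finset_sum]
      · exact Finset.sum_congr rfl fun k _ => integral_mul_const _ _
      · intro k hk
        simp only [Finset.mem_range, Nat.lt_succ_iff] at hk
        exact ((key η k (p - k) (by omega)).1).mul_const _
    rw [h1, h2]
    subst hq
    rw [Finset.sum_range_succ, Finset.sum_range_succ]
    have e1 : q + 2 - (q + 1) = 1 := by omega
    have e2 : q + 2 - (q + 2) = 0 := by omega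
    have e3 : (q + 2).choose (q + 1) = q + 2 := by
      simpa using Nat.choose_succ_self_right (q + 1)
    have e4 : (q + 2).choose (q + 2) = 1 := Nat.choose_self _
    have e5 : q + 2 - 1 = q + 1 := by omega
    simp only [e1, e2, e3, e4, e5, pow_one, pow_zero, mul_one, Nat.cast_one, Nat.cast_add,
      Nat.cast_ofNat, LinearMap.mkContinuous_apply, hL₀, LinearMap.coe_mk, AddHom.coe_mk]
    ring
  -- the little-o estimate
  rw [Asymptotics.isLittleO_iff]
  intro c hc
  set C : ℝ := ∑ k ∈ Finset.range (q + 1), (p.choose k : ℝ) * ‖ξ‖ ^ k with hC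
  have hC0 : 0 ≤ C := Finset.sum_nonneg fun k _ => by positivity
  have hδpos : 0 < min 1 (c / (C + 1)) := lt_min one_pos (by positivity)
  have hball := Metric.ball_mem_nhds (0 : Lp ℝ p μ) hδpos
  filter_upwards [hball] with η hη
  rw [mem_ball_zero_iff] at hη
  have hη1 : ‖η‖ ≤ 1 := le_of_lt (lt_of_lt_of_le hη (min_le_left _ _))
  have hη2 : ‖η‖ < c / (C + 1) := lt_of_lt_of_le hη (min_le_right _ _)
  have hη0 : (0:ℝ) ≤ ‖η‖ := norm_nonneg _
  rw [expand η]
  have hsum : |∑ k ∈ Finset.range (q + 1),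
      (∫ x, (ξ : X → ℝ) x ^ k * (η : X → ℝ) x ^ (p - k) ∂μ) * (p.choose k : ℝ)|
        ≤ C * ‖η‖ ^ 2 := by
    calc |∑ k ∈ Finset.range (q + 1),
        (∫ x, (ξ : X → ℝ) x ^ k * (η : X → ℝ) x ^ (p - k) ∂μ) * (p.choose k : ℝ)|
        ≤ ∑ k ∈ Finset.range (q + 1),
            |(∫ x, (ξ : X → ℝ) x ^ k * (η : X → ℝ) x ^ (p - k) ∂μ) * (p.choose k : ℝ)| :=
          Finset.abs_sum_le_sum_abs _ _
      _ ≤ ∑ k ∈ Finset.range (q + 1), (p.choose k : ℝ) * ‖ξ‖ ^ k * ‖η‖ ^ 2 := by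
          refine Finset.sum_le_sum fun k hk => ?_
          simp only [Finset.mem_range, Nat.lt_succ_iff] at hk
          have hkey := (key η k (p - k) (by omega)).2
          have hpow : ‖η‖ ^ (p - k) ≤ ‖η‖ ^ 2 :=
            pow_le_pow_of_le_one hη0 hη1 (by omega)
          have : |∫ x, (ξ : X → ℝ) x ^ k * (η : X → ℝ) x ^ (p - k) ∂μ| ≤ ‖ξ‖ ^ k * ‖η‖ ^ 2 :=
            le_trans hkey (by nlinarith [pow_nonneg (norm_nonneg ξ) k])
          rw [abs_mul, Nat.abs_cast]
          calc |∫ x, (ξ : X → ℝ) x ^ k * (η : X → ℝ) x ^ (p - k) ∂μ| * (p.choose k : ℝ)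
              ≤ (‖ξ‖ ^ k * ‖η‖ ^ 2) * (p.choose k : ℝ) :=
                mul_le_mul_of_nonneg_right this (Nat.cast_nonneg _)
            _ = (p.choose k : ℝ) * ‖ξ‖ ^ k * ‖η‖ ^ 2 := by ring
      _ = C * ‖η‖ ^ 2 := by rw [hC, ← Finset.sum_mul]
  rw [Real.norm_eq_abs]
  have hCη : C * ‖η‖ ≤ c := by
    have h1 : ‖η‖ * (C + 1) < c := by
      rwa [← lt_div_iff₀ (by positivity)]
    nlinarith
  calc |∑ k ∈ Finset.range (q + 1),
      (∫ x, (ξ : X → ℝ) x ^ k * (η : X → ℝ) x ^ (p - k) ∂μ) * (p.choose k : ℝ)|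
      ≤ C * ‖η‖ ^ 2 := hsum
    _ = (C * ‖η‖) * ‖η‖ := by ring
    _ ≤ c * ‖η‖ := mul_le_mul_of_nonneg_right hCη hη0
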